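/- The function F⁽²⁾(x₁,y₁,x₂,y₂) = (x₁-x₂)²/(4y₁²y₂²) on the product of two copies of the upper half-plane is annihilated by the diagonal prolongations of X₁ = ∂/∂x, X₂ = x∂/∂x + (y/2)∂/∂y, X₃ = x²∂/∂x + xy∂/∂y. -/

import Mathlib

/-- Action of the diagonal prolongation of a vector field `X = a∂ₓ + b∂_y` on `ℝ²`
(encoded as `X : ℝ × ℝ → ℝ × ℝ`) on a function `F(x₁,y₁,x₂,y₂)` on `(ℝ²)²`. -/
noncomputable def prolong (X : ℝ × ℝ → ℝ × ℝ) (F : ℝ → ℝ → ℝ → ℝ → ℝ)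
    (x₁ y₁ x₂ y₂ : ℝ) : ℝ :=
  (X (x₁, y₁)).1 * deriv (fun t => F t y₁ x₂ y₂) x₁
    + (X (x₁, y₁)).2 * deriv (fun t => F x₁ t x₂ y₂) y₁
    + (X (x₂, y₂)).1 * deriv (fun t => F x₁ y₁ t y₂) x₂
    + (X (x₂, y₂)).2 * deriv (fun t => F x₁ y₁ x₂ t) y₂

lemma deriv_x (c K x : ℝ) :
    deriv (fun t : ℝ => (t - c) ^ 2 / K) x = 2 * (x - c) / K := by
  rw [deriv_div_const]
  have h : HasDerivAt (fun t : ℝ => (t - c) ^ 2) (2 * (x - c)) x := by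
    have := ((hasDerivAt_id x).sub_const c).fun_pow 2
    simpa using this
  rw [h.deriv]

lemma deriv_y (K d y : ℝ) (hy : y ≠ 0) (hd : d ≠ 0) :
    deriv (fun t : ℝ => K / (4 * t ^ 2 * d ^ 2)) y
      = -(K * (8 * y * d ^ 2)) / (4 * y ^ 2 * d ^ 2) ^ 2 := by
  have hg : HasDerivAt (fun t : ℝ => 4 * t ^ 2 * d ^ 2) (8 * y * d ^ 2) y := by
    have := (((hasDerivAt_id y).fun_pow 2).const_mul 4).mul_const (d ^ 2)
    refine this.congr_deriv ?_
    simp only [Nat.cast_ofNat, id_eq, pow_one, mul_one]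
    ring
  have hne : (4 * y ^ 2 * d ^ 2) ≠ 0 := by positivity
  have := (hasDerivAt_const y K).fun_div hg hne
  rw [this.deriv]
  ring

/-- The constant of motion `F⁽²⁾ = (x₁-x₂)²/(4y₁²y₂²)` of class I₅ is annihilated
by the diagonal prolongations of `X₁ = ∂ₓ`, `X₂ = x∂ₓ + (y/2)∂_y`,
`X₃ = x²∂ₓ + xy∂_y` on the product of two upper half-planes. -/
theorem sl2_classI5_constant_of_motion :
    ∀ x₁ y₁ x₂ y₂ : ℝ, 0 < y₁ → 0 < y₂ →
      prolong (fun _ => (1, 0))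
        (fun a b c d => (a - c) ^ 2 / (4 * b ^ 2 * d ^ 2)) x₁ y₁ x₂ y₂ = 0 ∧
      prolong (fun q => (q.1, q.2 / 2))
        (fun a b c d => (a - c) ^ 2 / (4 * b ^ 2 * d ^ 2)) x₁ y₁ x₂ y₂ = 0 ∧
      prolong (fun q => (q.1 ^ 2, q.1 * q.2))
        (fun a b c d => (a - c) ^ 2 / (4 * b ^ 2 * d ^ 2)) x₁ y₁ x₂ y₂ = 0 := by
  intro x₁ y₁ x₂ y₂ h₁ h₂
  have hy₁ : y₁ ≠ 0 := ne_of_gt h₁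
  have hy₂ : y₂ ≠ 0 := ne_of_gt h₂
  have e1 : deriv (fun t : ℝ => (t - x₂) ^ 2 / (4 * y₁ ^ 2 * y₂ ^ 2)) x₁
      = 2 * (x₁ - x₂) / (4 * y₁ ^ 2 * y₂ ^ 2) := deriv_x _ _ _
  have e2 : deriv (fun t : ℝ => (x₁ - x₂) ^ 2 / (4 * t ^ 2 * y₂ ^ 2)) y₁
      = -((x₁ - x₂) ^ 2 * (8 * y₁ * y₂ ^ 2)) / (4 * y₁ ^ 2 * y₂ ^ 2) ^ 2 :=
    deriv_y _ _ _ hy₁ hy₂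
  have e3 : deriv (fun t : ℝ => (x₁ - t) ^ 2 / (4 * y₁ ^ 2 * y₂ ^ 2)) x₂
      = 2 * (x₂ - x₁) / (4 * y₁ ^ 2 * y₂ ^ 2) := by
    have := deriv_x x₁ (4 * y₁ ^ 2 * y₂ ^ 2) x₂
    simp only [show ∀ t : ℝ, (x₁ - t) ^ 2 = (t - x₁) ^ 2 by intro t; ring] at *
    exact this
  have e4 : deriv (fun t : ℝ => (x₁ - x₂) ^ 2 / (4 * y₁ ^ 2 * t ^ 2)) y₂
      = -((x₁ - x₂) ^ 2 * (8 * y₂ * y₁ ^ 2)) / (4 * y₂ ^ 2 * y₁ ^ 2) ^ 2 := by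
    have := deriv_y ((x₁ - x₂) ^ 2) y₁ y₂ hy₂ hy₁
    simpa [show ∀ t : ℝ, 4 * y₁ ^ 2 * t ^ 2 = 4 * t ^ 2 * y₁ ^ 2 by intro t; ring] using this
  refine ⟨?_, ?_, ?_⟩ <;>
  · simp only [prolong, e1, e2, e3, e4]
    field_simp
    ring
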